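/- Let r ≥ 2 and n, t ≥ 1 be integers, let k̂_1,…,k̂_r ∈ [n], and let 𝔉_1 ⊆ [n]^{(≤k̂_1)},…,𝔉_r ⊆ [n]^{(≤k̂_r)} be shifted non-empty r-cross t-intersecting families with maximal necessary intersection point a_*. Let j ∈ [r] and k ∈ [n] with n > k + min_{i∈[r]\{j}} k̂_i − t. Then for every F ∈ 𝔉_j(a_*) with |F| ≤ k there exists s ∈ [n] \ [a_*] such that σ_{s a_*}(F) ∉ 𝔉_j. -/

import Mathlib

open Finset

/-- The shift operation `σ_{ij}` on a set `F ⊆ ℕ`. -/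
def shift (i j : ℕ) (F : Finset ℕ) : Finset ℕ :=
  if j ∈ F ∧ i ∉ F then insert i (F.erase j) else F

/-- The shift operation on a family. -/
def shiftFam (i j : ℕ) (𝔉 : Finset (Finset ℕ)) : Finset (Finset ℕ) :=
  𝔉.image (shift i j) ∪ 𝔉.filter (fun F => shift i j F ∈ 𝔉)

/-- A family of subsets of `[n] = {1,…,n}` is shifted. -/
def IsShifted (n : ℕ) (𝔉 : Finset (Finset ℕ)) : Prop :=
  ∀ i j : ℕ, 1 ≤ i → i < j → j ≤ n → ∀ F ∈ 𝔉, shift i j F ∈ 𝔉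

/-- The intersection `⋂_{i ∈ s} G i` (for `s` nonempty). -/
def interOn {r : ℕ} (s : Finset (Fin r)) (G : Fin r → Finset ℕ) : Finset ℕ :=
  (s.sup G).filter fun x => ∀ i ∈ s, x ∈ G i

/-- The intersection `⋂_{i} G i`. -/
def interAll {r : ℕ} (G : Fin r → Finset ℕ) : Finset ℕ :=
  interOn Finset.univ G

/-- Families `𝔉 0, …, 𝔉 (r-1)` are `r`-cross `t`-intersecting. -/
def CrossIntersecting {r : ℕ} (t : ℕ) (𝔉 : Fin r → Finset (Finset ℕ)) : Prop :=
  ∀ G : Fin r → Finset ℕ, (∀ i, G i ∈ 𝔉 i) → t ≤ (interAll G).card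

/-- `a` is a necessary intersection point of the cross `t`-intersecting families `𝔉`. -/
def IsNIP {r : ℕ} (t : ℕ) (𝔉 : Fin r → Finset (Finset ℕ)) (a : ℕ) : Prop :=
  ∃ G : Fin r → Finset ℕ, (∀ i, G i ∈ 𝔉 i) ∧
    (Finset.Icc 1 a ∩ interAll G).card = t ∧ a ∈ interAll G

/-- An intersecting family. -/
def Intersecting' (𝔉 : Finset (Finset ℕ)) : Prop :=
  ∀ F ∈ 𝔉, ∀ F' ∈ 𝔉, (F ∩ F').Nonempty

/-- `a` is a necessary intersection point of the intersecting family `𝔉`. -/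
def IsNIP1 (𝔉 : Finset (Finset ℕ)) (a : ℕ) : Prop :=
  ∃ F ∈ 𝔉, ∃ F' ∈ 𝔉, (Finset.Icc 1 a ∩ F ∩ F').card = 1 ∧ a ∈ F ∩ F'

/-- `A_{n,a,t} = {F ⊆ [n] : |F ∩ [a]| ≥ t}`. -/
def famA (n a t : ℕ) : Finset (Finset ℕ) :=
  (Finset.Icc 1 n).powerset.filter (fun F => t ≤ (F ∩ Finset.Icc 1 a).card)

/-- `B_{n,a} = {F ⊆ [n] : [a] ⊆ F}`. -/
def famB (n a : ℕ) : Finset (Finset ℕ) :=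
  (Finset.Icc 1 n).powerset.filter (fun F => Finset.Icc 1 a ⊆ F)

/-- `F ∈ 𝔉 j` depends on `a`, i.e. `F ∈ 𝔉_j(a)`. -/
def DependsOn' {r : ℕ} (t : ℕ) (𝔉 : Fin r → Finset (Finset ℕ)) (a : ℕ) (j : Fin r)
    (F : Finset ℕ) : Prop :=
  F ∈ 𝔉 j ∧ ∃ G : Fin r → Finset ℕ, (∀ i, i ≠ j → G i ∈ 𝔉 i) ∧
    (Finset.Icc 1 a ∩ F ∩ interOn (Finset.univ.erase j) G).card = t ∧
    a ∈ F ∩ interOn (Finset.univ.erase j) G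

lemma erase_univ_nonempty {r : ℕ} (hr : 2 ≤ r) (i : Fin r) :
    (Finset.univ.erase i).Nonempty := by
  rw [← Finset.card_pos, Finset.card_erase_of_mem (Finset.mem_univ i),
    Finset.card_univ, Fintype.card_fin]
  omega

lemma mem_interOn {r : ℕ} {s : Finset (Fin r)} (hs : s.Nonempty) {G : Fin r → Finset ℕ}
    {x : ℕ} : x ∈ interOn s G ↔ ∀ i ∈ s, x ∈ G i := by
  unfold interOn
  simp only [Finset.mem_filter, Finset.mem_sup]
  constructor
  · exact fun h => h.2
  · intro h
    obtain ⟨i, hi⟩ := hs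
    exact ⟨⟨i, hi, h i hi⟩, h⟩

lemma interAll_eq_inter {r : ℕ} (hr : 2 ≤ r) (G : Fin r → Finset ℕ) (j : Fin r) :
    interAll G = G j ∩ interOn (Finset.univ.erase j) G := by
  have hu : (Finset.univ : Finset (Fin r)).Nonempty := ⟨j, Finset.mem_univ j⟩
  ext x
  rw [Finset.mem_inter, interAll, mem_interOn hu, mem_interOn (erase_univ_nonempty hr j)]
  constructor
  · intro h
    exact ⟨h j (Finset.mem_univ j), fun i _ => h i (Finset.mem_univ i)⟩
  · rintro ⟨hj, h⟩ i _
    by_cases hij : i = j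
    · subst hij; exact hj
    · exact h i (Finset.mem_erase.2 ⟨hij, Finset.mem_univ i⟩)

lemma interOn_update {r : ℕ} (hr : 2 ≤ r) (G : Fin r → Finset ℕ) (j : Fin r)
    (F' : Finset ℕ) :
    interOn (Finset.univ.erase j) (Function.update G j F')
      = interOn (Finset.univ.erase j) G := by
  ext x
  rw [mem_interOn (erase_univ_nonempty hr j), mem_interOn (erase_univ_nonempty hr j)]
  refine forall₂_congr fun i hi => ?_
  rw [Function.update_of_ne (Finset.mem_erase.1 hi).1]

/-- **Claim 4.1**: for `F ∈ 𝔉_j(a_*)` of size at most `k` there is `s ∈ [n] \ [a_*]`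
with `σ_{s a_*}(F) ∉ 𝔉_j`. -/
theorem exists_shift_not_mem_cross
    (r n t : ℕ) (hr : 2 ≤ r) (hn : 1 ≤ n) (ht : 1 ≤ t)
    (khat : Fin r → ℕ) (hkhat1 : ∀ i, 1 ≤ khat i) (hkhatn : ∀ i, khat i ≤ n)
    (𝔉 : Fin r → Finset (Finset ℕ))
    (hsub : ∀ i, 𝔉 i ⊆ (Finset.Icc 1 n).powerset.filter (fun F => F.card ≤ khat i))
    (hne : ∀ i, (𝔉 i).Nonempty)
    (hshift : ∀ i, IsShifted n (𝔉 i))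
    (hcross : CrossIntersecting t 𝔉)
    (astar : ℕ) (hNIP : IsNIP t 𝔉 astar) (hmax : ∀ b, IsNIP t 𝔉 b → b ≤ astar)
    (j : Fin r) (k : ℕ) (hk1 : 1 ≤ k) (hkn : k ≤ n)
    (hbound : k + (Finset.univ.erase j).inf' (erase_univ_nonempty hr j) khat < n + t)
    (F : Finset ℕ) (hdep : DependsOn' t 𝔉 astar j F) (hcard : F.card ≤ k) :
    ∃ s : ℕ, astar < s ∧ s ≤ n ∧ shift s astar F ∉ 𝔉 j := by
  obtain ⟨hF, G, hGmem, hXt, hXa⟩ := hdep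
  set Y := interOn (Finset.univ.erase j) G with hY
  obtain ⟨i', hi'mem, hi'eq⟩ := Finset.exists_mem_eq_inf' (erase_univ_nonempty hr j) khat
  have hij' : i' ≠ j := (Finset.mem_erase.1 hi'mem).1
  have hGi' : G i' ∈ 𝔉 i' := hGmem i' hij'
  have hGsub : G i' ⊆ Finset.Icc 1 n :=
    Finset.mem_powerset.1 (Finset.mem_filter.1 (hsub i' hGi')).1
  have hGcard : (G i').card ≤ khat i' := (Finset.mem_filter.1 (hsub i' hGi')).2
  have hFsub : F ⊆ Finset.Icc 1 n :=
    Finset.mem_powerset.1 (Finset.mem_filter.1 (hsub j hF)).1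
  have haF : astar ∈ F := (Finset.mem_inter.1 hXa).1
  have ha1 : 1 ≤ astar := (Finset.mem_Icc.1 (hFsub haF)).1
  have han : astar ≤ n := (Finset.mem_Icc.1 (hFsub haF)).2
  have hYsubGi' : Y ⊆ G i' := fun x hx =>
    (mem_interOn (erase_univ_nonempty hr j)).1 hx i' hi'mem
  set X := F ∩ Y with hXdef
  have hXt' : (Finset.Icc 1 astar ∩ X).card = t := by
    rw [hXdef, ← Finset.inter_assoc]; exact hXt
  have haX : astar ∈ X := hXa
  -- the key machine: if the shifted set is in 𝔉 j, we get a NIP above astar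
  have key : ∀ s, 1 ≤ s → s ∉ F → s ∉ G i' →
      insert s (F.erase astar) ∈ 𝔉 j → False := by
    intro s hs1 hsF hsG hmem'
    set F' := insert s (F.erase astar) with hF'
    set G' := Function.update G j F' with hG'
    have hG'mem : ∀ i, G' i ∈ 𝔉 i := by
      intro i
      by_cases h : i = j
      · subst h; rw [hG', Function.update_self]; exact hmem'
      · rw [hG', Function.update_of_ne h]; exact hGmem i h
    have hIA : interAll G' = F' ∩ Y := by
      rw [interAll_eq_inter hr G' j, hG', Function.update_self, hY, interOn_update hr]
    have hsY : s ∉ Y := fun h => hsG (hYsubGi' h)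
    have hX' : F' ∩ Y = X.erase astar := by
      ext x
      simp only [hF', hXdef, Finset.mem_inter, Finset.mem_insert, Finset.mem_erase]
      constructor
      · rintro ⟨rfl | ⟨hne', hxF⟩, hxY⟩
        · exact absurd hxY hsY
        · exact ⟨hne', hxF, hxY⟩
      · rintro ⟨hne', hxF, hxY⟩
        exact ⟨Or.inr ⟨hne', hxF⟩, hxY⟩
    have hcardX' : t ≤ (X.erase astar).card := by
      have h := hcross G' hG'mem
      rwa [hIA, hX'] at h
    have hAcard : (Finset.Icc 1 astar ∩ X.erase astar).card = t - 1 := by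
      have heq : Finset.Icc 1 astar ∩ X.erase astar
          = (Finset.Icc 1 astar ∩ X).erase astar := by
        ext x
        simp only [Finset.mem_inter, Finset.mem_erase]
        tauto
      rw [heq, Finset.card_erase_of_mem, hXt']
      exact Finset.mem_inter.2 ⟨Finset.mem_Icc.2 ⟨ha1, le_refl _⟩, haX⟩
    have hne2 : (X.erase astar \ Finset.Icc 1 astar).Nonempty := by
      rw [← Finset.card_pos]
      have h1 := Finset.card_inter_add_card_sdiff (X.erase astar) (Finset.Icc 1 astar)
      rw [Finset.inter_comm] at h1
      omega
    set b := (X.erase astar \ Finset.Icc 1 astar).min' hne2 with hb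
    have hbmem := Finset.min'_mem _ hne2
    rw [Finset.mem_sdiff] at hbmem
    obtain ⟨hbX, hbA⟩ := hbmem
    have hbF : b ∈ F := (Finset.mem_inter.1 (Finset.mem_of_mem_erase hbX)).1
    have hb1 : 1 ≤ b := (Finset.mem_Icc.1 (hFsub hbF)).1
    have hab : astar < b := by
      rw [Finset.mem_Icc] at hbA; omega
    have hNIPb : IsNIP t 𝔉 b := by
      refine ⟨G', hG'mem, ?_, ?_⟩
      · rw [hIA, hX']
        have heq : Finset.Icc 1 b ∩ X.erase astar
            = insert b (Finset.Icc 1 astar ∩ X.erase astar) := by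
          ext x
          simp only [Finset.mem_inter, Finset.mem_insert, Finset.mem_Icc]
          constructor
          · rintro ⟨⟨hx1, hxb⟩, hxX⟩
            by_cases hxa : x ≤ astar
            · exact Or.inr ⟨⟨hx1, hxa⟩, hxX⟩
            · left
              have hle : b ≤ x := by
                refine Finset.min'_le _ x (Finset.mem_sdiff.2 ⟨hxX, ?_⟩)
                rw [Finset.mem_Icc]; omega
              omega
          · rintro (rfl | ⟨⟨hx1, hxa⟩, hxX⟩)
            · exact ⟨⟨hb1, le_refl _⟩, hbX⟩
            · exact ⟨⟨hx1, by omega⟩, hxX⟩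
        rw [heq, Finset.card_insert_of_notMem, hAcard]
        · omega
        · intro h
          exact hbA (Finset.mem_inter.1 h).1
      · rw [hIA, hX']; exact hbX
    have := hmax b hNIPb
    omega
  -- find s outside F ∪ G i'
  have htFG : t ≤ (F ∩ G i').card := by
    refine le_trans (le_of_eq hXt'.symm) (Finset.card_le_card ?_)
    intro x hx
    have hxX : x ∈ X := (Finset.mem_inter.1 hx).2
    rw [hXdef, Finset.mem_inter] at hxX
    exact Finset.mem_inter.2 ⟨hxX.1, hYsubGi' hxX.2⟩
  have hcardU : (F ∪ G i').card < (Finset.Icc 1 n).card := by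
    have h1 := Finset.card_union_add_card_inter F (G i')
    have h2 : (Finset.Icc 1 n).card = n := by rw [Nat.card_Icc]; omega
    rw [← hi'eq] at hGcard
    omega
  have hssub : F ∪ G i' ⊂ Finset.Icc 1 n :=
    (Finset.union_subset hFsub hGsub).ssubset_of_ne
      (fun h => absurd hcardU (by rw [h]; exact lt_irrefl _))
  obtain ⟨s, hsIcc, hsFG⟩ := Finset.exists_of_ssubset hssub
  rw [Finset.mem_union, not_or] at hsFG
  obtain ⟨hs1, hsn⟩ := Finset.mem_Icc.1 hsIcc
  have heqshift : shift s astar F = insert s (F.erase astar) := by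
    rw [shift, if_pos ⟨haF, hsFG.1⟩]
  rcases lt_or_ge astar s with hlt | hle
  · refine ⟨s, hlt, hsn, fun hmem' => ?_⟩
    exact key s hs1 hsFG.1 hsFG.2 (heqshift ▸ hmem')
  · exfalso
    have hslt : s < astar := lt_of_le_of_ne hle fun h => hsFG.1 (h ▸ haF)
    have hmem' : shift s astar F ∈ 𝔉 j := hshift j s astar hs1 hslt han F hF
    exact key s hs1 hsFG.1 hsFG.2 (heqshift ▸ hmem')
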